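/- Let ⪯ be a well-founded, infinite branching tree order on ℕ. Let (μ_j)_{j∈ℕ} be a sequence of finitely supported positive measures on ℕ with pairwise disjoint supports, and let c > 0 be such that μ_j(ℕ) < c for all j ∈ ℕ. Then for every ε > 0 there exist an infinite set L ⊆ ℕ and, for each j ∈ L, a subset G_j of supp μ_j such that: (i) μ_j(ℕ ∖ G_j) ≤ ε for every j ∈ L; and (ii) for all j ≠ j' in L, every element of G_j is ⪯-incomparable with every element of G_{j'} (neither s ⪯ t nor t ⪯ s). -/

import Mathlib

/-- A tree order on ℕ: a partial order compatible with the usual order, in which every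
node has a finite, totally ordered set of predecessors. -/
structure TreeOrder where
  le : ℕ → ℕ → Prop
  le_refl : ∀ n, le n n
  le_antisymm : ∀ {m n}, le m n → le n m → m = n
  le_trans : ∀ {a b c}, le a b → le b c → le a c
  compat : ∀ {m n}, le m n → m ≤ n
  pred_finite : ∀ n, {m | le m n}.Finite
  pred_chain : ∀ n, ∀ a, le a n → ∀ b, le b n → le a b ∨ le b a

/-- The tree is well-founded: there is no infinite ⪯-chain. -/
def TreeOrder.IsWellFoundedTree (T : TreeOrder) : Prop :=
  ¬ ∃ c : ℕ → ℕ, StrictMono c ∧ ∀ i, T.le (c i) (c (i + 1))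

/-- `s` is an immediate successor of `t`. -/
def TreeOrder.ImmSucc (T : TreeOrder) (t s : ℕ) : Prop :=
  T.le t s ∧ t ≠ s ∧ ∀ u, T.le t u → T.le u s → u = t ∨ u = s

/-- The tree is infinite branching: every non-maximal node has infinitely many
immediate successors. -/
def TreeOrder.InfiniteBranching (T : TreeOrder) : Prop :=
  ∀ t, (∃ s, T.le t s ∧ t ≠ s) → {s | T.ImmSucc t s}.Infinite

/-- Two nodes are incomparable. -/
def TreeOrder.Incomp (T : TreeOrder) (s t : ℕ) : Prop :=
  ¬ T.le s t ∧ ¬ T.le t s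

/-- The measure of a set `A` under a (finitely supported, positive) density `μ : ℕ → ℝ`. -/
noncomputable def mset (μ : ℕ → ℝ) (A : Set ℕ) : ℝ :=
  ∑' t, A.indicator μ t

open Classical

/-! ### mset toolbox -/

variable {μ : ℕ → ℝ}

lemma mset_eq_sum (hf : (Function.support μ).Finite) (A : Set ℕ) :
    mset μ A = ∑ t ∈ hf.toFinset, A.indicator μ t := by
  apply tsum_eq_sum
  intro t ht
  have : μ t = 0 := by
    by_contra h
    exact ht (hf.mem_toFinset.2 h)
  simp [Set.indicator, this]

lemma mset_nonneg (hf : (Function.support μ).Finite) (hnn : ∀ t, 0 ≤ μ t) (A : Set ℕ) :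
    0 ≤ mset μ A := by
  rw [mset_eq_sum hf]
  exact Finset.sum_nonneg fun t _ => Set.indicator_nonneg (fun s _ => hnn s) t

lemma mset_mono (hf : (Function.support μ).Finite) (hnn : ∀ t, 0 ≤ μ t) {A B : Set ℕ}
    (hAB : A ⊆ B) : mset μ A ≤ mset μ B := by
  rw [mset_eq_sum hf, mset_eq_sum hf]
  refine Finset.sum_le_sum fun t _ => ?_
  by_cases h : t ∈ A
  · simp [Set.indicator, h, hAB h]
  · simp [Set.indicator, h]
    by_cases h' : t ∈ B <;> simp [h', hnn t]

lemma mset_union_le (hf : (Function.support μ).Finite) (hnn : ∀ t, 0 ≤ μ t) (A B : Set ℕ) :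
    mset μ (A ∪ B) ≤ mset μ A + mset μ B := by
  rw [mset_eq_sum hf, mset_eq_sum hf, mset_eq_sum hf, ← Finset.sum_add_distrib]
  refine Finset.sum_le_sum fun t _ => ?_
  by_cases hA : t ∈ A <;> by_cases hB : t ∈ B <;>
    simp [Set.indicator, hA, hB, hnn t]

lemma mset_union_disjoint (hf : (Function.support μ).Finite) {A B : Set ℕ}
    (h : Disjoint A B) : mset μ (A ∪ B) = mset μ A + mset μ B := by
  rw [mset_eq_sum hf, mset_eq_sum hf, mset_eq_sum hf, ← Finset.sum_add_distrib]
  refine Finset.sum_congr rfl fun t _ => ?_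
  by_cases hA : t ∈ A
  · have hB : t ∉ B := fun hB => (h.ne_of_mem hA hB) rfl
    simp [Set.indicator, hA, hB]
  · by_cases hB : t ∈ B <;> simp [Set.indicator, hA, hB]

lemma mset_zero_of_support_disjoint (hf : (Function.support μ).Finite) {A : Set ℕ}
    (h : A ∩ Function.support μ = ∅) : mset μ A = 0 := by
  rw [mset_eq_sum hf]
  refine Finset.sum_eq_zero fun t _ => ?_
  by_cases hA : t ∈ A
  · have : μ t = 0 := by
      by_contra hm
      have : t ∈ A ∩ Function.support μ := ⟨hA, hm⟩
      rw [h] at this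
      exact this
    simp [Set.indicator, hA, this]
  · simp [Set.indicator, hA]

lemma mset_biUnion_le (hf : (Function.support μ).Finite) (hnn : ∀ t, 0 ≤ μ t)
    (s : Finset ℕ) (A : ℕ → Set ℕ) :
    mset μ (⋃ i ∈ s, A i) ≤ ∑ i ∈ s, mset μ (A i) := by
  induction s using Finset.induction with
  | empty => simp [mset_eq_sum hf]
  | insert a s' hx ih =>
    rw [Finset.sum_insert hx]
    calc mset μ (⋃ i ∈ insert a s', A i) ≤ mset μ (A a ∪ ⋃ i ∈ s', A i) := by
          apply mset_mono hf hnn; simp [Set.subset_def]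
      _ ≤ mset μ (A a) + mset μ (⋃ i ∈ s', A i) := mset_union_le hf hnn _ _
      _ ≤ _ := by linarith

lemma mset_biUnion_disjoint (hf : (Function.support μ).Finite)
    (s : Finset ℕ) (A : ℕ → Set ℕ)
    (hd : ∀ i ∈ s, ∀ l ∈ s, i ≠ l → Disjoint (A i) (A l)) :
    ∑ i ∈ s, mset μ (A i) = mset μ (⋃ i ∈ s, A i) := by
  induction s using Finset.induction with
  | empty => simp [mset_eq_sum hf]
  | insert a s' hx ih =>
    rw [Finset.sum_insert hx]
    have hun : (⋃ i ∈ insert a s', A i) = A a ∪ ⋃ i ∈ s', A i :=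
      Finset.set_biUnion_insert a s' A
    have hdisj2 : Disjoint (A a) (⋃ i ∈ s', A i) := by
      rw [Set.disjoint_iff_inter_eq_empty]
      ext x; simp only [Set.mem_inter_iff, Set.mem_iUnion, Set.mem_empty_iff_false, iff_false]
      rintro ⟨hxa, i, hi, hxi⟩
      have := hd a (Finset.mem_insert_self a s') i (Finset.mem_insert_of_mem hi)
        (by rintro rfl; exact hx hi)
      exact (this.ne_of_mem hxa hxi) rfl
    rw [hun, mset_union_disjoint hf hdisj2,
      ih (fun i hi l hl hil => hd i (Finset.mem_insert_of_mem hi) l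
        (Finset.mem_insert_of_mem hl) hil)]

/-! ### tree set toolbox -/

def upF (T : TreeOrder) (F : Finset ℕ) : Set ℕ := {x | ∃ t ∈ F, T.le t x}

def downS (T : TreeOrder) (F : Finset ℕ) : Set ℕ := {x | ∃ t ∈ F, T.le x t}

lemma upF_mono (T : TreeOrder) {F F' : Finset ℕ} (h : F ⊆ F') : upF T F ⊆ upF T F' :=
  fun x ⟨t, ht, hle⟩ => ⟨t, h ht, hle⟩

lemma downS_finite (T : TreeOrder) (F : Finset ℕ) : (downS T F).Finite := by
  have : downS T F ⊆ ⋃ t ∈ F, {m | T.le m t} := by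
    rintro x ⟨t, ht, hle⟩; exact Set.mem_biUnion ht hle
  exact Set.Finite.subset (F.finite_toSet.biUnion fun t _ => T.pred_finite t) this

lemma cone_disjoint (T : TreeOrder) {u v : ℕ} (h : T.Incomp u v) :
    Disjoint {x | T.le u x} {x | T.le v x} := by
  rw [Set.disjoint_left]
  intro x hux hvx
  rcases T.pred_chain x u hux v hvx with h1 | h1
  · exact h.1 h1
  · exact h.2 h1

lemma upF_disjoint (T : TreeOrder) {P Q : Finset ℕ}
    (h : ∀ x ∈ P, ∀ y ∈ Q, T.Incomp x y) : Disjoint (upF T P) (upF T Q) := by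
  rw [Set.disjoint_left]
  rintro x ⟨t, ht, htx⟩ ⟨s, hs, hsx⟩
  rcases T.pred_chain x t htx s hsx with h1 | h1
  · exact (h t ht s hs).1 h1
  · exact (h t ht s hs).2 h1

lemma upF_empty (T : TreeOrder) : upF T ∅ = ∅ := by
  ext x; simp [upF]

/-- a finite set meets only finitely many of a disjoint family of supports -/
lemma finitely_many_meet {μ : ℕ → ℕ → ℝ}
    (hdisj : ∀ j j', j ≠ j' → Disjoint (Function.support (μ j)) (Function.support (μ j')))
    {S : Set ℕ} (hS : S.Finite) :
    {j | (Function.support (μ j) ∩ S).Nonempty}.Finite := by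
  set f : ℕ → ℕ := fun j =>
    if h : (Function.support (μ j) ∩ S).Nonempty then h.choose else 0 with hfdef
  have hfmem : ∀ j ∈ {j | (Function.support (μ j) ∩ S).Nonempty},
      f j ∈ Function.support (μ j) ∩ S := by
    intro j hj
    have hj' : (Function.support (μ j) ∩ S).Nonempty := hj
    simp only [hfdef, dif_pos hj']
    exact hj'.choose_spec
  have hinj : Set.InjOn f {j | (Function.support (μ j) ∩ S).Nonempty} := by
    intro j hj j' hj' hEq
    by_contra hne
    have h1 := hfmem j hj
    have h2 := hfmem j' hj'
    rw [hEq] at h1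
    exact (hdisj j j' hne).ne_of_mem h1.1 h2.1 rfl
  refine Set.Finite.of_finite_image (Set.Finite.subset hS ?_) hinj
  rintro x ⟨j, hj, rfl⟩
  exact (hfmem j hj).2

/-! ### the bad-family predicate and descent -/

def IsBad (T : TreeOrder) (μ : ℕ → ℕ → ℝ) (A : Set ℕ) : Prop :=
  ∃ δ : ℝ, 0 < δ ∧ ∃ σ : ℕ → ℕ, StrictMono σ ∧ ∃ F : ℕ → Finset ℕ,
    (∀ i, (F i : Set ℕ) ⊆ A ∩ Function.support (μ (σ i))) ∧
    (∀ i m, i < m → δ ≤ mset (μ (σ m)) (upF T (F i)))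

set_option maxHeartbeats 2000000 in
lemma descent (T : TreeOrder) (μ : ℕ → ℕ → ℝ)
    (hnn : ∀ j t, 0 ≤ μ j t) (hfin : ∀ j, (Function.support (μ j)).Finite)
    (hdisj : ∀ j j', j ≠ j' → Disjoint (Function.support (μ j)) (Function.support (μ j')))
    (c : ℝ) (hbd : ∀ j, mset (μ j) Set.univ < c)
    {A : Set ℕ} (hbad : IsBad T μ A) :
    ∃ u ∈ A, IsBad T μ {x | T.le u x ∧ x ≠ u} := by
  classical
  obtain ⟨δ, hδ, σ, hσ, F, hFsub, hFmass⟩ := hbad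
  -- configurations
  set Cfg : ℕ → Prop := fun r => ∃ P : ℕ → Finset ℕ, ∃ M : Set ℕ, M.Infinite ∧
    (∀ i, i < r → (P i : Set ℕ) ⊆ A) ∧
    (∀ i, i < r → ∀ l, l < r → i ≠ l → ∀ x ∈ P i, ∀ y ∈ P l, T.Incomp x y) ∧
    (∀ m ∈ M, ∀ i, i < r → δ/2 ≤ mset (μ (σ m)) (upF T (P i))) with hCfgdef
  have hCfg0 : Cfg 0 := by
    refine ⟨fun _ => ∅, Set.univ, Set.infinite_univ, ?_, ?_, ?_⟩ <;> intros <;> omega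
  have hCfgbd : ∀ r, Cfg r → (r : ℝ) * (δ/2) ≤ c := by
    intro r ⟨P, M, hM, _, hPinc, hPmass⟩
    obtain ⟨m, hm⟩ := hM.nonempty
    have hdisjU : ∀ i ∈ Finset.range r, ∀ l ∈ Finset.range r, i ≠ l →
        Disjoint (upF T (P i)) (upF T (P l)) := by
      intro i hi l hl hil
      exact upF_disjoint T (hPinc i (Finset.mem_range.1 hi) l (Finset.mem_range.1 hl) hil)
    have heq := mset_biUnion_disjoint (hfin (σ m)) (Finset.range r)
      (fun i => upF T (P i)) hdisjU
    have h1 : ∑ i ∈ Finset.range r, (δ/2) ≤ ∑ i ∈ Finset.range r, mset (μ (σ m)) (upF T (P i)) :=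
      Finset.sum_le_sum fun i hi => hPmass m hm i (Finset.mem_range.1 hi)
    have h2 : mset (μ (σ m)) (⋃ i ∈ Finset.range r, upF T (P i)) ≤ mset (μ (σ m)) Set.univ :=
      mset_mono (hfin (σ m)) (hnn (σ m)) (Set.subset_univ _)
    have h3 := hbd (σ m)
    rw [Finset.sum_const, Finset.card_range, nsmul_eq_mul] at h1
    rw [heq] at h1
    linarith
  have hCfgN : ∀ r, Cfg r → r ≤ Nat.ceil (2*c/δ) := by
    intro r hr
    have h1 := hCfgbd r hr
    have h2 : (r : ℝ) ≤ 2*c/δ := by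
      rw [le_div_iff₀ hδ]; linarith
    exact_mod_cast h2.trans (Nat.le_ceil _)
  set rs := Nat.findGreatest Cfg (Nat.ceil (2*c/δ) + 1) with hrsdef
  have hCr : Cfg rs := Nat.findGreatest_spec (Nat.zero_le _) hCfg0
  have hmax : ¬ Cfg (rs + 1) := by
    intro h
    exact Nat.findGreatest_is_greatest (Nat.lt_succ_self rs)
      (by have := hCfgN _ h; omega) h
  obtain ⟨P, M, hM, hPA, hPinc, hPmass⟩ := hCr
  set U : Finset ℕ := (Finset.range rs).biUnion P with hUdef
  have hUA : (U : Set ℕ) ⊆ A := by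
    intro x hx
    simp only [hUdef, Finset.coe_biUnion, Set.mem_iUnion, Finset.mem_coe,
      Finset.mem_range] at hx
    obtain ⟨i, hi, hxi⟩ := hx
    exact hPA i hi hxi
  -- step 1 : no extension
  have hnoext : ∀ j, (Function.support (μ (σ j)) ∩ downS T U) = ∅ →
      {m | m ∈ M ∧ j < m ∧ δ/2 ≤ mset (μ (σ m))
        (upF T ((F j).filter (fun x => x ∉ upF T U ∧ x ∉ downS T U)))}.Finite := by
    intro j hj
    by_contra hinf
    apply hmax
    set Pnew := (F j).filter (fun x => x ∉ upF T U ∧ x ∉ downS T U) with hPnew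
    refine ⟨fun i => if i = rs then Pnew else P i,
      {m | m ∈ M ∧ j < m ∧ δ/2 ≤ mset (μ (σ m)) (upF T Pnew)}, hinf, ?_, ?_, ?_⟩
    · intro i hi
      show ((if i = rs then Pnew else P i : Finset ℕ) : Set ℕ) ⊆ A
      split_ifs with h
      · intro x hx
        exact ((hFsub j) (Finset.mem_of_mem_filter x hx)).1
      · exact hPA i (by omega)
    · intro i hi l hl hil x hx y hy
      have hnew : ∀ z ∈ Pnew, ∀ w ∈ U, T.Incomp z w := by
        intro z hz w hw
        rw [hPnew, Finset.mem_filter] at hz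
        constructor
        · intro hle; exact hz.2.2 ⟨w, hw, hle⟩
        · intro hle; exact hz.2.1 ⟨w, hw, hle⟩
      have hPU : ∀ i', i' < rs → ∀ y ∈ P i', y ∈ U := by
        intro i' hi' y hy
        exact Finset.mem_biUnion.2 ⟨i', Finset.mem_range.2 hi', hy⟩
      have hx' : x ∈ (if i = rs then Pnew else P i : Finset ℕ) := hx
      have hy' : y ∈ (if l = rs then Pnew else P l : Finset ℕ) := hy
      clear hx hy
      split_ifs at hx' hy' with h1 h2 h2
      · omega
      · exact hnew x hx' y (hPU l (by omega) y hy')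
      · have := hnew y hy' x (hPU i (by omega) x hx')
        exact ⟨this.2, this.1⟩
      · exact hPinc i (by omega) l (by omega) hil x hx' y hy'
    · rintro m ⟨hmM, hjm, hmass⟩ i hi
      show δ/2 ≤ mset (μ (σ m)) (upF T (if i = rs then Pnew else P i))
      split_ifs with h
      · exact hmass
      · exact hPmass m hmM i (by omega)
  -- finitely many supports meet the (finite) down-set of U
  have hdisjs : ∀ i l, i ≠ l →
      Disjoint (Function.support (μ (σ i))) (Function.support (μ (σ l))) :=
    fun i l h => hdisj _ _ (fun hEq => h (hσ.injective hEq))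
  have hgoodfin : {i | (Function.support (μ (σ i)) ∩ downS T U).Nonempty}.Finite :=
    finitely_many_meet hdisjs (downS_finite T U)
  set M₀ : Set ℕ := M \ {i | (Function.support (μ (σ i)) ∩ downS T U).Nonempty} with hM₀
  have hM₀inf : M₀.Infinite := hM.diff hgoodfin
  have hM₀M : M₀ ⊆ M := Set.diff_subset
  set δ' : ℝ := δ / (2 * U.card) with hδ'
  -- forcing : for good j, later masses concentrate above U
  have hforce : ∀ j ∈ M₀, ∃ Exc : Set ℕ, Exc.Finite ∧ ∀ m ∈ M, j < m → m ∉ Exc →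
      δ/2 ≤ mset (μ (σ m)) (upF T ((F j).filter (fun x => x ∈ upF T U))) := by
    intro j hj
    have hjd : Function.support (μ (σ j)) ∩ downS T U = ∅ :=
      Set.not_nonempty_iff_eq_empty.1 (fun h => hj.2 h)
    refine ⟨_, hnoext j hjd, ?_⟩
    intro m hm hjm hnot
    have hmassF := hFmass j m hjm
    have hsplit : upF T (F j) ⊆
        upF T ((F j).filter (fun x => x ∉ upF T U ∧ x ∉ downS T U)) ∪
        upF T ((F j).filter (fun x => x ∈ upF T U)) := by
      rintro z ⟨t, ht, hle⟩
      by_cases hup : t ∈ upF T U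
      · exact Or.inr ⟨t, Finset.mem_filter.2 ⟨ht, hup⟩, hle⟩
      · have hdn : t ∉ downS T U := by
          intro hd
          have hmem : t ∈ Function.support (μ (σ j)) ∩ downS T U := ⟨(hFsub j ht).2, hd⟩
          rw [hjd] at hmem; exact hmem
        exact Or.inl ⟨t, Finset.mem_filter.2 ⟨ht, hup, hdn⟩, hle⟩
    have h1 : mset (μ (σ m)) (upF T (F j)) ≤
        mset (μ (σ m)) (upF T ((F j).filter (fun x => x ∉ upF T U ∧ x ∉ downS T U)))
        + mset (μ (σ m)) (upF T ((F j).filter (fun x => x ∈ upF T U))) :=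
      le_trans (mset_mono (hfin _) (hnn _) hsplit) (mset_union_le (hfin _) (hnn _) _ _)
    have h2 : mset (μ (σ m)) (upF T ((F j).filter (fun x => x ∉ upF T U ∧ x ∉ downS T U)))
        < δ/2 := by
      by_contra hcon
      push_neg at hcon
      exact hnot ⟨hm, hjm, hcon⟩
    linarith
  -- the key extraction step
  have key : ∀ N : Set ℕ, N.Infinite → N ⊆ M₀ → ∃ u ∈ U, ∃ N' : Set ℕ,
      N'.Infinite ∧ N' ⊆ N ∧ ∀ m ∈ N', sInf N < m ∧
        δ' ≤ mset (μ (σ m)) (upF T ((F (sInf N)).filter (fun x => T.le u x))) := by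
    intro N hN hNM
    set j := sInf N with hjdef
    have hjN : j ∈ N := Nat.sInf_mem hN.nonempty
    obtain ⟨Exc, hExcF, hE⟩ := hforce j (hNM hjN)
    set C : Set ℕ := N \ (Exc ∪ Set.Iic j) with hC
    have hCinf : C.Infinite := hN.diff (hExcF.union (Set.finite_Iic j))
    have hCsub : C ⊆ N := Set.diff_subset
    have hCprop : ∀ m ∈ C, j < m ∧
        δ/2 ≤ mset (μ (σ m)) (upF T ((F j).filter (fun x => x ∈ upF T U))) := by
      intro m hm
      have hjm : j < m := by
        have h3 : m ∉ Exc ∪ Set.Iic j := hm.2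
        simp only [Set.mem_union, Set.mem_Iic, not_or, not_le] at h3
        exact h3.2
      exact ⟨hjm, hE m (hM₀M (hNM hm.1)) hjm (fun h => hm.2 (Or.inl h))⟩
    have hUne : U.Nonempty := by
      by_contra hUe
      rw [Finset.not_nonempty_iff_eq_empty] at hUe
      obtain ⟨m, hm⟩ := hCinf.nonempty
      have hfe : (F j).filter (fun x => x ∈ upF T U) = ∅ := by
        rw [Finset.filter_eq_empty_iff]
        intro x _ hx
        rw [hUe] at hx
        obtain ⟨t, ht, -⟩ := hx
        exact absurd ht (Finset.notMem_empty t)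
      have h0 := (hCprop m hm).2
      rw [hfe, upF_empty] at h0
      have h0' : mset (μ (σ m)) (∅ : Set ℕ) = 0 :=
        mset_zero_of_support_disjoint (hfin _) (by simp)
      rw [h0'] at h0
      linarith
    have hcover : ∀ m ∈ C, ∃ u ∈ U,
        δ' ≤ mset (μ (σ m)) (upF T ((F j).filter (fun x => T.le u x))) := by
      intro m hm
      by_contra hcon
      push_neg at hcon
      have hsub : upF T ((F j).filter (fun x => x ∈ upF T U)) ⊆
          ⋃ u ∈ U, upF T ((F j).filter (fun x => T.le u x)) := by
        rintro z ⟨t, ht, hle⟩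
        rw [Finset.mem_filter] at ht
        obtain ⟨u, hu, hut⟩ := ht.2
        exact Set.mem_biUnion hu ⟨t, Finset.mem_filter.2 ⟨ht.1, hut⟩, hle⟩
      have hb : mset (μ (σ m)) (upF T ((F j).filter (fun x => x ∈ upF T U))) ≤
          ∑ u ∈ U, mset (μ (σ m)) (upF T ((F j).filter (fun x => T.le u x))) :=
        le_trans (mset_mono (hfin (σ m)) (hnn (σ m)) hsub)
          (mset_biUnion_le (hfin (σ m)) (hnn (σ m)) U _)
      have hlt : ∑ u ∈ U, mset (μ (σ m)) (upF T ((F j).filter (fun x => T.le u x))) <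
          ∑ _u ∈ U, δ' := Finset.sum_lt_sum_of_nonempty hUne (fun u hu => hcon u hu)
      rw [Finset.sum_const, nsmul_eq_mul] at hlt
      have hcard : (0:ℝ) < (U.card : ℝ) := by
        exact_mod_cast Finset.card_pos.2 hUne
      have hcd : (U.card : ℝ) * δ' = δ/2 := by
        rw [hδ']; field_simp
      have h0 := (hCprop m hm).2
      rw [hcd] at hlt
      linarith
    have hex : ∃ u ∈ U, {m | m ∈ C ∧
        δ' ≤ mset (μ (σ m)) (upF T ((F j).filter (fun x => T.le u x)))}.Infinite := by
      by_contra hcon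
      push_neg at hcon
      apply hCinf
      refine Set.Finite.subset (Set.Finite.biUnion U.finite_toSet
        (fun u hu => hcon u hu)) ?_
      intro m hm
      obtain ⟨u, hu, hmu⟩ := hcover m hm
      exact Set.mem_biUnion hu ⟨hm, hmu⟩
    obtain ⟨u, hu, hSinf⟩ := hex
    exact ⟨u, hu, _, hSinf, fun m hm => hCsub hm.1,
      fun m hm => ⟨(hCprop m hm.1).1, hm.2⟩⟩
  -- iterate the key step
  have hstep : ∀ s : {N : Set ℕ // N.Infinite ∧ N ⊆ M₀}, ∃ u ∈ U, ∃ N' : Set ℕ,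
      N'.Infinite ∧ N' ⊆ s.1 ∧ ∀ m ∈ N', sInf s.1 < m ∧
        δ' ≤ mset (μ (σ m)) (upF T ((F (sInf s.1)).filter (fun x => T.le u x))) :=
    fun s => key s.1 s.2.1 s.2.2
  choose us hus Ns hNinf hNsub hNprop using hstep
  set next : {N : Set ℕ // N.Infinite ∧ N ⊆ M₀} → {N : Set ℕ // N.Infinite ∧ N ⊆ M₀} :=
    fun s => ⟨Ns s, hNinf s, (hNsub s).trans s.2.2⟩ with hnext
  set seq : ℕ → {N : Set ℕ // N.Infinite ∧ N ⊆ M₀} :=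
    fun n => next^[n] ⟨M₀, hM₀inf, subset_rfl⟩ with hseqdef
  have hseq : ∀ n, seq (n+1) = next (seq n) := fun n => Function.iterate_succ_apply' next n _
  set J : ℕ → ℕ := fun l => sInf (seq l).1 with hJ
  have hseqsub : ∀ l, (seq (l+1)).1 ⊆ (seq l).1 := by
    intro l; rw [hseq l]; exact hNsub (seq l)
  have hseqmono : ∀ l k, (seq (l+k)).1 ⊆ (seq l).1 := by
    intro l k
    induction k with
    | zero => exact subset_rfl
    | succ k ih => exact (show (seq (l+k+1)).1 ⊆ (seq (l+k)).1 from hseqsub (l+k)).trans ih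
  have hJmem : ∀ l, J l ∈ (seq l).1 := fun l => Nat.sInf_mem (seq l).2.1.nonempty
  have hpropl : ∀ l, ∀ m ∈ (seq (l+1)).1, J l < m ∧
      δ' ≤ mset (μ (σ m)) (upF T ((F (J l)).filter (fun x => T.le (us (seq l)) x))) := by
    intro l
    rw [hseq l]
    exact hNprop (seq l)
  have hJmono : StrictMono J :=
    strictMono_nat_of_lt_succ (fun l => (hpropl l _ (hJmem (l+1))).1)
  have hpairs : ∀ l l', l < l' → δ' ≤ mset (μ (σ (J l')))
      (upF T ((F (J l)).filter (fun x => T.le (us (seq l)) x))) := by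
    intro l l' hll
    have hsub2 : (seq l').1 ⊆ (seq (l+1)).1 := by
      have h2 := hseqmono (l+1) (l' - (l+1))
      rwa [show l+1+(l'-(l+1)) = l' by omega] at h2
    exact (hpropl l _ (hsub2 (hJmem l'))).2
  -- pigeonhole on the colours
  have hcol : ∃ w ∈ U, {l | us (seq l) = w}.Infinite := by
    by_contra hcon
    push_neg at hcon
    have hfin2 : (Set.univ : Set ℕ).Finite := by
      refine Set.Finite.subset (Set.Finite.biUnion U.finite_toSet
        (fun u hu => hcon u hu)) ?_
      intro l _
      exact Set.mem_biUnion (hus (seq l)) rfl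
    exact Set.infinite_univ hfin2
  obtain ⟨w, hw, hΛ0⟩ := hcol
  have hsing : {l | w ∈ F (J l)}.Subsingleton := by
    intro l hl l' hl'
    by_contra hne
    have h1 : w ∈ Function.support (μ (σ (J l))) := (hFsub (J l) hl).2
    have h2 : w ∈ Function.support (μ (σ (J l'))) := (hFsub (J l') hl').2
    exact (hdisjs (J l) (J l') (fun h => hne (hJmono.injective h))).ne_of_mem h1 h2 rfl
  set Λ : Set ℕ := {l | us (seq l) = w} \ {l | w ∈ F (J l)} with hΛ
  have hΛinf : Λ.Infinite := hΛ0.diff hsing.finite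
  set lam : ℕ → ℕ := Nat.nth (· ∈ Λ) with hlam
  have hlammem : ∀ i, lam i ∈ Λ := fun i => Nat.nth_mem_of_infinite hΛinf i
  have hlammono : StrictMono lam := Nat.nth_strictMono hΛinf
  have hδ'pos : 0 < δ' := by
    rw [hδ']
    apply div_pos hδ
    have : (0:ℝ) < (U.card : ℝ) := by exact_mod_cast Finset.card_pos.2 ⟨w, hw⟩
    linarith
  refine ⟨w, hUA hw, δ', hδ'pos, fun i => σ (J (lam i)), hσ.comp (hJmono.comp hlammono),
    fun i => (F (J (lam i))).filter (fun x => T.le w x), ?_, ?_⟩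
  · intro i x hx
    rw [Finset.mem_coe, Finset.mem_filter] at hx
    refine ⟨⟨hx.2, fun hEq => (hlammem i).2 (by rw [← hEq]; exact hx.1)⟩, (hFsub _ hx.1).2⟩
  · intro i m him
    have hp := hpairs (lam i) (lam m) (hlammono him)
    have hcolor : us (seq (lam i)) = w := (hlammem i).1
    rw [hcolor] at hp
    exact hp

lemma noBad (T : TreeOrder) (hwf : T.IsWellFoundedTree) (μ : ℕ → ℕ → ℝ)
    (hnn : ∀ j t, 0 ≤ μ j t) (hfin : ∀ j, (Function.support (μ j)).Finite)
    (hdisj : ∀ j j', j ≠ j' → Disjoint (Function.support (μ j)) (Function.support (μ j')))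
    (c : ℝ) (hbd : ∀ j, mset (μ j) Set.univ < c)
    (A : Set ℕ) : ¬ IsBad T μ A := by
  intro hbad
  have hd : ∀ s : {u : ℕ // IsBad T μ {x | T.le u x ∧ x ≠ u}},
      ∃ u' : ℕ, (T.le s.1 u' ∧ u' ≠ s.1) ∧ IsBad T μ {x | T.le u' x ∧ x ≠ u'} := by
    intro s
    obtain ⟨u', hu', hb⟩ := descent T μ hnn hfin hdisj c hbd s.2
    exact ⟨u', hu', hb⟩
  choose f hf1 hf2 using hd
  obtain ⟨u₀, -, hb₀⟩ := descent T μ hnn hfin hdisj c hbd hbad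
  set step : {u : ℕ // IsBad T μ {x | T.le u x ∧ x ≠ u}} →
      {u : ℕ // IsBad T μ {x | T.le u x ∧ x ≠ u}} := fun s => ⟨f s, hf2 s⟩ with hstep
  set g : ℕ → {u : ℕ // IsBad T μ {x | T.le u x ∧ x ≠ u}} :=
    fun n => step^[n] ⟨u₀, hb₀⟩ with hg
  have hgs : ∀ n, g (n+1) = step (g n) := fun n => Function.iterate_succ_apply' step n _
  have hle : ∀ n, T.le ((g n).1) ((g (n+1)).1) ∧ ((g (n+1)).1) ≠ ((g n).1) := by
    intro n
    rw [hgs n]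
    exact (hf1 (g n))
  apply hwf
  refine ⟨fun n => (g n).1, ?_, fun n => (hle n).1⟩
  apply strictMono_nat_of_lt_succ
  intro n
  exact lt_of_le_of_ne (T.compat (hle n).1) (fun h => (hle n).2 h.symm)

lemma KL (T : TreeOrder) (hwf : T.IsWellFoundedTree) (μ : ℕ → ℕ → ℝ)
    (hnn : ∀ j t, 0 ≤ μ j t) (hfin : ∀ j, (Function.support (μ j)).Finite)
    (hdisj : ∀ j j', j ≠ j' → Disjoint (Function.support (μ j)) (Function.support (μ j')))
    (c : ℝ) (hbd : ∀ j, mset (μ j) Set.univ < c)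
    (M : Set ℕ) (hM : M.Infinite) {δ : ℝ} (hδ : 0 < δ) :
    ∃ j ∈ M, ∃ M' : Set ℕ, M'.Infinite ∧ M' ⊆ M ∧ j ∉ M' ∧
      ∀ m ∈ M', mset (μ m) (upF T (hfin j).toFinset) ≤ δ := by
  classical
  by_contra hcon
  push_neg at hcon
  have hSfin : ∀ j ∈ M, {m | m ∈ M ∧ mset (μ m) (upF T (hfin j).toFinset) ≤ δ}.Finite := by
    intro j hj
    by_contra hinf
    have hinf' : {m | m ∈ M ∧ mset (μ m) (upF T (hfin j).toFinset) ≤ δ}.Infinite := hinf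
    obtain ⟨m, hm, hgt⟩ := hcon j hj
      ({m | m ∈ M ∧ mset (μ m) (upF T (hfin j).toFinset) ≤ δ} \ {j})
      (hinf'.diff (Set.finite_singleton j)) (fun m hm => hm.1.1)
      (fun h => h.2 rfl)
    exact absurd hm.1.2 (not_le.2 hgt)
  -- diagonal extraction
  have hstepex : ∀ s : {W : Set ℕ // W.Infinite ∧ W ⊆ M}, ∃ W' : Set ℕ,
      W'.Infinite ∧ W' ⊆ s.1 ∧ (∀ m ∈ W', sInf s.1 < m ∧
        δ < mset (μ m) (upF T (hfin (sInf s.1)).toFinset)) := by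
    rintro ⟨W, hW, hWM⟩
    set j := sInf W with hj
    have hjW : j ∈ W := Nat.sInf_mem hW.nonempty
    refine ⟨W \ ({m | m ∈ M ∧ mset (μ m) (upF T (hfin j).toFinset) ≤ δ} ∪ Set.Iic j),
      hW.diff ((hSfin j (hWM hjW)).union (Set.finite_Iic j)), Set.diff_subset, ?_⟩
    intro m hm
    have h3 : m ∉ _ ∪ _ := hm.2
    simp only [Set.mem_union, Set.mem_Iic, not_or, not_le] at h3
    refine ⟨h3.2, ?_⟩
    by_contra hle
    push_neg at hle
    exact h3.1 ⟨hWM hm.1, hle⟩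
  choose Wf hWinf hWsub hWprop using hstepex
  set next : {W : Set ℕ // W.Infinite ∧ W ⊆ M} → {W : Set ℕ // W.Infinite ∧ W ⊆ M} :=
    fun s => ⟨Wf s, hWinf s, (hWsub s).trans s.2.2⟩ with hnext
  set seq : ℕ → {W : Set ℕ // W.Infinite ∧ W ⊆ M} :=
    fun n => next^[n] ⟨M, hM, subset_rfl⟩ with hseqdef
  have hseq : ∀ n, seq (n+1) = next (seq n) := fun n => Function.iterate_succ_apply' next n _
  set J : ℕ → ℕ := fun l => sInf (seq l).1 with hJ
  have hJmem : ∀ l, J l ∈ (seq l).1 := fun l => Nat.sInf_mem (seq l).2.1.nonempty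
  have hpropl : ∀ l, ∀ m ∈ (seq (l+1)).1, J l < m ∧
      δ < mset (μ m) (upF T (hfin (J l)).toFinset) := by
    intro l
    rw [hseq l]
    exact hWprop (seq l)
  have hseqsub : ∀ l, (seq (l+1)).1 ⊆ (seq l).1 := by
    intro l
    rw [hseq l]
    exact hWsub (seq l)
  have hseqmono : ∀ l k, (seq (l+k)).1 ⊆ (seq l).1 := by
    intro l k
    induction k with
    | zero => exact subset_rfl
    | succ k ih => exact (show (seq (l+k+1)).1 ⊆ (seq (l+k)).1 from hseqsub (l+k)).trans ih
  have hJmono : StrictMono J :=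
    strictMono_nat_of_lt_succ (fun l => (hpropl l _ (hJmem (l+1))).1)
  have hpairs : ∀ l l', l < l' → δ ≤ mset (μ (J l')) (upF T (hfin (J l)).toFinset) := by
    intro l l' hll
    have hsub2 : (seq l').1 ⊆ (seq (l+1)).1 := by
      have h2 := hseqmono (l+1) (l' - (l+1))
      rwa [show l+1+(l'-(l+1)) = l' by omega] at h2
    exact le_of_lt (hpropl l _ (hsub2 (hJmem l'))).2
  exact noBad T hwf μ hnn hfin hdisj c hbd Set.univ
    ⟨δ, hδ, J, hJmono, fun l => (hfin (J l)).toFinset,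
      fun l => by
        rw [Set.Finite.coe_toFinset]
        exact fun x hx => ⟨trivial, hx⟩,
      fun i m him => hpairs i m him⟩

/-- for a sequence of disjointly and finitely supported positive measures on a
well-founded infinite branching tree on ℕ, uniformly bounded by `c`, and every `ε > 0`, one
can pass to an infinite set `L` of indices and find sets `G j ⊆ supp μ j` carrying all but
`ε` of the mass of `μ j`, with the `G j`, `j ∈ L`, pairwise incomparable. -/
theorem statement0 (T : TreeOrder) (hwf : T.IsWellFoundedTree) (hib : T.InfiniteBranching)
    (μ : ℕ → ℕ → ℝ)
    (hnn : ∀ j t, 0 ≤ μ j t)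
    (hfin : ∀ j, (Function.support (μ j)).Finite)
    (hdisj : ∀ j j', j ≠ j' → Disjoint (Function.support (μ j)) (Function.support (μ j')))
    (c : ℝ) (hc : 0 < c) (hbd : ∀ j, mset (μ j) Set.univ < c)
    (ε : ℝ) (hε : 0 < ε) :
    ∃ L : Set ℕ, L.Infinite ∧ ∃ G : ℕ → Set ℕ,
      (∀ j ∈ L, G j ⊆ Function.support (μ j)) ∧
      (∀ j ∈ L, mset (μ j) (G j)ᶜ ≤ ε) ∧
      (∀ j ∈ L, ∀ j' ∈ L, j ≠ j' → ∀ s ∈ G j, ∀ t ∈ G j', T.Incomp s t) := by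
  classical
  -- refined KL step: also avoid the down-set of the support
  have KLs : ∀ (k : ℕ) (s : {W : Set ℕ // W.Infinite}), ∃ j ∈ s.1, ∃ W' : Set ℕ,
      W'.Infinite ∧ W' ⊆ s.1 ∧ j ∉ W' ∧
      (∀ m ∈ W', mset (μ m) (upF T (hfin j).toFinset) ≤ ε/2^(k+1)) ∧
      (∀ m ∈ W', Function.support (μ m) ∩ downS T (hfin j).toFinset = ∅) := by
    rintro k ⟨W, hW⟩
    have hd : (0:ℝ) < ε/2^(k+1) := by positivity
    obtain ⟨j, hj, M', h1, h2, h3, h4⟩ := KL T hwf μ hnn hfin hdisj c hbd W hW hd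
    refine ⟨j, hj, M' \ {m | (Function.support (μ m) ∩ downS T (hfin j).toFinset).Nonempty},
      h1.diff (finitely_many_meet hdisj (downS_finite T _)),
      (Set.diff_subset).trans h2, fun h => h3 h.1, fun m hm => h4 m hm.1, ?_⟩
    intro m hm
    exact Set.not_nonempty_iff_eq_empty.1 hm.2
  choose nf hnfmem Wf hWinf hWsub hWnot hWup hWdown using KLs
  set next : ℕ → {W : Set ℕ // W.Infinite} → {W : Set ℕ // W.Infinite} :=
    fun k s => ⟨Wf k s, hWinf k s⟩ with hnext
  set seq : ℕ → {W : Set ℕ // W.Infinite} :=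
    fun k => Nat.rec ⟨Set.univ, Set.infinite_univ⟩ (fun k s => next k s) k with hseqdef
  have hseq : ∀ k, seq (k+1) = next k (seq k) := fun k => rfl
  set n : ℕ → ℕ := fun k => nf k (seq k) with hn
  have hsub1 : ∀ k, (seq (k+1)).1 ⊆ (seq k).1 := fun k => hWsub k (seq k)
  have hmono : ∀ l k, (seq (l+k)).1 ⊆ (seq l).1 := by
    intro l k
    induction k with
    | zero => exact subset_rfl
    | succ k ih => exact (show (seq (l+k+1)).1 ⊆ (seq (l+k)).1 from hsub1 (l+k)).trans ih
  have hmono' : ∀ l k, l < k → (seq k).1 ⊆ (seq (l+1)).1 := by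
    intro l k h
    have h2 := hmono (l+1) (k-(l+1))
    rwa [show l+1+(k-(l+1)) = k by omega] at h2
  have hnmem : ∀ k, n k ∈ (seq k).1 := fun k => hnfmem k (seq k)
  have hnnot : ∀ k, n k ∉ (seq (k+1)).1 := fun k => hWnot k (seq k)
  have hninj : Function.Injective n := by
    intro k k' hEq
    by_contra hne
    rcases Nat.lt_or_ge k k' with h | h
    · exact hnnot k (hmono' k k' h (hEq ▸ hnmem k'))
    · have h' : k' < k := by omega
      exact hnnot k' (hmono' k' k h' (hEq.symm ▸ hnmem k))
  have hup : ∀ l k, l < k → mset (μ (n k)) (upF T (hfin (n l)).toFinset) ≤ ε/2^(l+1) :=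
    fun l k h => hWup l (seq l) (n k) (hmono' l k h (hnmem k))
  have hdown : ∀ l k, l < k →
      Function.support (μ (n k)) ∩ downS T (hfin (n l)).toFinset = ∅ :=
    fun l k h => hWdown l (seq l) (n k) (hmono' l k h (hnmem k))
  -- the sets G
  set Bk : ℕ → Set ℕ := fun k =>
    ⋃ i ∈ Finset.range k, (upF T (hfin (n i)).toFinset ∪ downS T (hfin (n i)).toFinset)
    with hBk
  set G : ℕ → Set ℕ := fun j =>
    if h : ∃ k, n k = j then (((hfin j).toFinset : Set ℕ) \ Bk h.choose) else ∅ with hGdef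
  have hG : ∀ k, G (n k) = (((hfin (n k)).toFinset : Set ℕ) \ Bk k) := by
    intro k
    have h : ∃ k', n k' = n k := ⟨k, rfl⟩
    have hch : h.choose = k := hninj h.choose_spec
    simp only [hGdef, dif_pos h, hch]
  refine ⟨Set.range n, Set.infinite_range_of_injective hninj, G, ?_, ?_, ?_⟩
  · rintro j ⟨k, rfl⟩
    rw [hG k]
    intro x hx
    have := hx.1
    rwa [Finset.mem_coe, Set.Finite.mem_toFinset] at this
  · rintro j ⟨k, rfl⟩
    rw [hG k]
    have hcompl : ((((hfin (n k)).toFinset : Set ℕ)) \ Bk k)ᶜ ⊆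
        (Function.support (μ (n k)))ᶜ ∪ Bk k := by
      intro x hx
      rw [Set.mem_compl_iff, Set.mem_diff, not_and, not_not] at hx
      by_cases hs : x ∈ Function.support (μ (n k))
      · exact Or.inr (hx (by rwa [Finset.mem_coe, Set.Finite.mem_toFinset]))
      · exact Or.inl hs
    have h1 : mset (μ (n k)) ((((hfin (n k)).toFinset : Set ℕ)) \ Bk k)ᶜ ≤
        mset (μ (n k)) ((Function.support (μ (n k)))ᶜ) + mset (μ (n k)) (Bk k) :=
      le_trans (mset_mono (hfin _) (hnn _) hcompl) (mset_union_le (hfin _) (hnn _) _ _)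
    have h2 : mset (μ (n k)) ((Function.support (μ (n k)))ᶜ) = 0 :=
      mset_zero_of_support_disjoint (hfin _) (by simp)
    have h3 : mset (μ (n k)) (Bk k) ≤
        ∑ i ∈ Finset.range k, mset (μ (n k))
          (upF T (hfin (n i)).toFinset ∪ downS T (hfin (n i)).toFinset) :=
      mset_biUnion_le (hfin _) (hnn _) _ _
    have h4 : ∀ i ∈ Finset.range k, mset (μ (n k))
        (upF T (hfin (n i)).toFinset ∪ downS T (hfin (n i)).toFinset) ≤ ε/2^(i+1) := by
      intro i hi
      have hik : i < k := Finset.mem_range.1 hi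
      have ha := mset_union_le (hfin (n k)) (hnn (n k)) (upF T (hfin (n i)).toFinset)
        (downS T (hfin (n i)).toFinset)
      have hb := hup i k hik
      have hcc : mset (μ (n k)) (downS T (hfin (n i)).toFinset) = 0 := by
        apply mset_zero_of_support_disjoint (hfin _)
        rw [Set.inter_comm]
        exact hdown i k hik
      linarith
    have h5 : ∑ i ∈ Finset.range k, mset (μ (n k))
        (upF T (hfin (n i)).toFinset ∪ downS T (hfin (n i)).toFinset) ≤
        ∑ i ∈ Finset.range k, ε/2^(i+1) := Finset.sum_le_sum h4
    have h6 : ∀ m : ℕ, ∑ i ∈ Finset.range m, ε/2^(i+1) = ε - ε/2^m := by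
      intro m
      induction m with
      | zero => simp
      | succ m ih =>
        rw [Finset.sum_range_succ, ih, pow_succ]
        have h2m : (2:ℝ)^m ≠ 0 := by positivity
        field_simp
        ring
    have h7 : ∑ i ∈ Finset.range k, ε/2^(i+1) ≤ ε := by
      rw [h6 k]
      have : (0:ℝ) < ε/2^k := by positivity
      linarith
    linarith
  · rintro j ⟨k, rfl⟩ j' ⟨k', rfl⟩ hne s hs t ht
    have hkk' : k ≠ k' := fun h => hne (by rw [h])
    have main : ∀ a b, a < b → ∀ s ∈ G (n a), ∀ t ∈ G (n b), T.Incomp s t := by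
      intro a b hab s hs t ht
      rw [hG a] at hs
      rw [hG b] at ht
      have hsD : s ∈ (hfin (n a)).toFinset := by
        have := hs.1; rwa [Finset.mem_coe] at this
      have htB : t ∉ Bk b := ht.2
      constructor
      · intro hle
        apply htB
        rw [hBk]
        exact Set.mem_biUnion (Finset.mem_range.2 hab) (Or.inl ⟨s, hsD, hle⟩)
      · intro hle
        apply htB
        rw [hBk]
        exact Set.mem_biUnion (Finset.mem_range.2 hab) (Or.inr ⟨s, hsD, hle⟩)
    rcases Nat.lt_or_ge k k' with h | h
    · exact main k k' h s hs t ht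
    · have h' : k' < k := by omega
      have := main k' k h' t ht s hs
      exact ⟨this.2, this.1⟩
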